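/- Let r₊, r₋ : ℝ → ℝ be C¹ solutions of ±r±' + r±² + κ = 0 (i.e., r₊' + r₊² + κ = 0 and -r₋' + r₋² + κ = 0) with κ continuous, -K ≤ κ ≤ -k < 0, and r₊(t) > 0 > r₋(t) for all t. Then r₊(t) - r₋(t) ≥ 2√k for all t. -/

import Mathlib

lemma key_riccati (κ f : ℝ → ℝ) (k : ℝ) (hk : 0 < k) (hκ : ∀ t, κ t ≤ -k)
    (hf : ∀ t, HasDerivAt f (-(f t) ^ 2 - κ t) t) (hpos : ∀ t, 0 < f t) :
    ∀ t, Real.sqrt k ≤ f t := by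
  set b := Real.sqrt k with hbdef
  have hb : 0 < b := Real.sqrt_pos.2 hk
  have hb2 : b ^ 2 = k := Real.sq_sqrt hk.le
  have hfd : ∀ t, deriv f t = -(f t) ^ 2 - κ t := fun t => (hf t).deriv
  have hcont : Continuous f := by
    rw [continuous_iff_continuousAt]; exact fun t => (hf t).continuousAt
  intro t₀
  by_contra h
  push_neg at h
  -- Step 1 : f s < b for all s ≤ t₀
  have step1 : ∀ s ≤ t₀, f s < b := by
    intro s hs
    by_contra h1
    push_neg at h1
    have hslt : s < t₀ := lt_of_le_of_ne hs (by rintro rfl; exact absurd h1 (not_le.2 h))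
    obtain ⟨s₂, hs₂mem, hs₂ub⟩ :=
      (isCompact_Icc.inter_right (isClosed_Ici.preimage hcont)).exists_isGreatest
        ⟨s, ⟨⟨le_refl s, hs⟩, h1⟩⟩
    obtain ⟨⟨hss₂, hs₂t₀⟩, hfs₂⟩ := hs₂mem
    have hs₂lt : s₂ < t₀ := lt_of_le_of_ne hs₂t₀ (by
      rintro rfl; exact absurd hfs₂ (not_le.2 h))
    have hmono : StrictMonoOn f (Set.Icc s₂ t₀) := by
      apply strictMonoOn_of_deriv_pos (convex_Icc _ _) hcont.continuousOn
      intro u hu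
      rw [interior_Icc] at hu
      have hunotS : f u < b := by
        by_contra h2
        push_neg at h2
        have : u ≤ s₂ := hs₂ub ⟨⟨le_trans hss₂ hu.1.le, hu.2.le⟩, h2⟩
        exact absurd hu.1 (not_lt.2 this)
      rw [hfd]
      have := hκ u
      have := hpos u
      nlinarith
    have : f s₂ < f t₀ :=
      hmono ⟨le_refl s₂, hs₂lt.le⟩ ⟨hs₂lt.le, le_refl t₀⟩ hs₂lt
    have hb2' : b ≤ f s₂ := hfs₂
    linarith
  -- Step 2 : monotone on Iic t₀, hence f s ≤ f t₀
  have mono : MonotoneOn f (Set.Iic t₀) := by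
    apply monotoneOn_of_deriv_nonneg (convex_Iic t₀) hcont.continuousOn
    · exact fun u _ => (hf u).differentiableAt.differentiableWithinAt
    · intro u hu
      rw [interior_Iic] at hu
      have h1 := step1 u hu.le
      have := hκ u
      have := hpos u
      rw [hfd]
      nlinarith
  set a := f t₀ with hadef
  have ha : 0 < a := hpos t₀
  set c := k - a ^ 2 with hcdef
  have hc : 0 < c := by
    have : a ^ 2 < b ^ 2 := by nlinarith
    rw [hcdef]; nlinarith
  -- Step 3 : g = f - c·id is monotone on Iic t₀
  have gmono : MonotoneOn (fun s => f s - c * s) (Set.Iic t₀) := by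
    apply monotoneOn_of_deriv_nonneg (convex_Iic t₀)
      (Continuous.continuousOn (by fun_prop))
    · intro u _
      exact ((hf u).sub ((hasDerivAt_id u).const_mul c)).differentiableAt.differentiableWithinAt
    · intro u hu
      rw [interior_Iic] at hu
      have hd : HasDerivAt (fun s => f s - c * s) ((-(f u) ^ 2 - κ u) - c * 1) u :=
        (hf u).sub ((hasDerivAt_id u).const_mul c)
      rw [hd.deriv]
      have hfa : f u ≤ a := mono (Set.mem_Iic.2 hu.le) (Set.mem_Iic.2 (le_refl t₀)) hu.le
      have := hκ u
      have := hpos u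
      nlinarith
  set s := t₀ - (a + 1) / c with hsdef
  have hst : s ≤ t₀ := by
    have h0 : 0 < (a + 1) / c := div_pos (by linarith) hc
    rw [hsdef]; linarith
  have := gmono (Set.mem_Iic.2 hst) (Set.mem_Iic.2 (le_refl t₀)) hst
  simp only at this
  have hfs : f s ≤ a - c * (t₀ - s) := by linarith
  have hcs : c * (t₀ - s) = a + 1 := by
    rw [hsdef]; field_simp; ring
  have := hpos s
  linarith [hfs, hcs.symm ▸ hfs]

theorem stmt_17 (κ rp rm : ℝ → ℝ) (k K : ℝ)
    (hk : 0 < k) (hkK : k ≤ K)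
    (hκc : Continuous κ)
    (hκ : ∀ t : ℝ, -K ≤ κ t ∧ κ t ≤ -k)
    (hrp : ∀ t : ℝ, HasDerivAt rp (-(rp t) ^ 2 - κ t) t)
    (hrm : ∀ t : ℝ, HasDerivAt rm ((rm t) ^ 2 + κ t) t)
    (hpos : ∀ t : ℝ, rm t < 0 ∧ 0 < rp t) :
    ∀ t : ℝ, 2 * Real.sqrt k ≤ rp t - rm t := by
  have h1 := key_riccati κ rp k hk (fun t => (hκ t).2) hrp (fun t => (hpos t).2)
  have h2 := key_riccati κ (fun t => -rm t) k hk (fun t => (hκ t).2)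
    (fun t => by
      have : HasDerivAt (fun x => -rm x) (-(rm t ^ 2 + κ t)) t := (hrm t).neg
      convert this using 1
      ring)
    (fun t => by simpa using (hpos t).1)
  intro t
  have := h1 t
  have := h2 t
  linarith
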